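/- Let ℓ ≥ 1, let D ∈ ℝ^{ℓ×ℓ} be the diagonal matrix whose first ℓ−1 diagonal entries are 1 and whose last diagonal entry is 1/2, let Ω ∈ ℝ^{ℓ×ℓ} be a skew-symmetric matrix (Ωᵀ = −Ω), and set R := D + Ω. If the 2×2 block matrix [[I_ℓ, Rᵀ],[R, I_ℓ]] is positive semidefinite, then Ω = 0. -/

import Mathlib

open Matrix

noncomputable section

/-- The diagonal matrix `D = diag(1, …, 1, 1/2)`. -/
def Ddiag (l : ℕ) : Matrix (Fin l) (Fin l) ℝ :=
  Matrix.of fun i j => if i = j then (if (i : ℕ) = l - 1 then 1/2 else 1) else 0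

/-- The `2ℓ×2ℓ` block matrix `[[I_ℓ, Rᵀ], [R, I_ℓ]]`. -/
def blockIRtRI (l : ℕ) (R : Matrix (Fin l) (Fin l) ℝ) :
    Matrix (Fin (2*l)) (Fin (2*l)) ℝ :=
  Matrix.of fun i j =>
    if h1 : (i : ℕ) < l then
      if h2 : (j : ℕ) < l then (if i = j then 1 else 0)
      else Rᵀ ⟨(i : ℕ), h1⟩ ⟨(j : ℕ) - l, by omega⟩
    else
      if h2 : (j : ℕ) < l then R ⟨(i : ℕ) - l, by omega⟩ ⟨(j : ℕ), h2⟩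
      else (if (i : ℕ) = (j : ℕ) then 1 else 0)

lemma block_submatrix (l : ℕ) (R : Matrix (Fin l) (Fin l) ℝ) :
    (blockIRtRI l R).submatrix
      (Sum.elim (fun a : Fin l => (⟨(a : ℕ), by omega⟩ : Fin (2*l)))
        (fun a : Fin l => (⟨l + (a : ℕ), by omega⟩ : Fin (2*l))))
      (Sum.elim (fun a : Fin l => (⟨(a : ℕ), by omega⟩ : Fin (2*l)))
        (fun a : Fin l => (⟨l + (a : ℕ), by omega⟩ : Fin (2*l))))
      = fromBlocks 1 Rᵀ R 1 := by
  ext i j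
  cases i with
  | inl i =>
    cases j with
    | inl j =>
      simp only [submatrix_apply, Sum.elim_inl, blockIRtRI, of_apply, fromBlocks_apply₁₁]
      rw [dif_pos i.isLt, dif_pos j.isLt]
      simp [Matrix.one_apply, Fin.ext_iff]
    | inr j =>
      simp only [submatrix_apply, Sum.elim_inl, Sum.elim_inr, blockIRtRI, of_apply,
        fromBlocks_apply₁₂]
      rw [dif_pos i.isLt, dif_neg (by omega)]
      congr 1 <;> exact Fin.ext (by simp)
  | inr i =>
    cases j with
    | inl j =>
      simp only [submatrix_apply, Sum.elim_inl, Sum.elim_inr, blockIRtRI, of_apply,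
        fromBlocks_apply₂₁]
      rw [dif_neg (by omega), dif_pos j.isLt]
      congr 1 <;> exact Fin.ext (by simp)
    | inr j =>
      simp only [submatrix_apply, Sum.elim_inr, blockIRtRI, of_apply, fromBlocks_apply₂₂]
      rw [dif_neg (by omega), dif_neg (by omega)]
      simp [Matrix.one_apply, Fin.ext_iff]

/-- If `Ω` is skew-symmetric, `R = D + Ω` with `D = diag(1,…,1,1/2)`, and the block matrix
`[[I_ℓ, Rᵀ],[R, I_ℓ]]` is positive semidefinite, then `Ω = 0`. -/
theorem skew_part_vanishes (l : ℕ) (hl : 1 ≤ l)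
    (Ω : Matrix (Fin l) (Fin l) ℝ) (hΩ : Ωᵀ = -Ω)
    (h : (blockIRtRI l (Ddiag l + Ω)).PosSemidef) :
    Ω = 0 := by
  set R : Matrix (Fin l) (Fin l) ℝ := Ddiag l + Ω with hR
  -- the block matrix fromBlocks form is PSD
  have hb : (fromBlocks (1 : Matrix (Fin l) (Fin l) ℝ) Rᵀ R 1).PosSemidef := by
    rw [← block_submatrix l R]
    exact h.submatrix _
  have hRth : Rᵀᴴ = R := by ext i j; simp [conjTranspose_apply]
  have hschur : ((1 : Matrix (Fin l) (Fin l) ℝ) - R * Rᵀ).PosSemidef := by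
    have h1 : (1 : Matrix (Fin l) (Fin l) ℝ).PosDef := Matrix.PosDef.one
    haveI : Invertible (1 : Matrix (Fin l) (Fin l) ℝ) := invertibleOne
    have := (Matrix.PosDef.fromBlocks₁₁ Rᵀ (1 : Matrix (Fin l) (Fin l) ℝ) h1).mp
      (by rwa [hRth])
    simpa [hRth, Matrix.mul_one] using this
  -- diagonal entries nonneg
  have hdiag : ∀ i : Fin l, ∑ k, (R i k)^2 ≤ 1 := by
    intro i
    have h0 : (0:ℝ) ≤ star (Pi.single i 1 : Fin l → ℝ) ⬝ᵥ
        (((1 : Matrix (Fin l) (Fin l) ℝ) - R * Rᵀ) *ᵥ Pi.single i 1) := hschur.dotProduct_mulVec_nonneg _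
    have : (0:ℝ) ≤ 1 - ∑ k, R i k * R i k := by
      simpa [Matrix.sub_apply, Matrix.mul_apply, Matrix.one_apply, mulVec,
        dotProduct, Pi.single_apply] using h0
    simpa [pow_two] using by linarith [this]
  have hdiagΩ : ∀ i : Fin l, Ω i i = 0 := by
    intro i
    have := congrFun (congrFun hΩ i) i
    simp only [transpose_apply, Matrix.neg_apply] at this
    linarith
  -- rows away from the last index vanish
  have hrow : ∀ i j : Fin l, (i : ℕ) ≠ l - 1 → Ω i j = 0 := by
    intro i j hi
    rcases eq_or_ne j i with rfl | hij
    · exact hdiagΩ _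
    have hij' : ¬ i = j := fun hh => hij hh.symm
    have hRii : R i i = 1 := by
      simp [hR, Ddiag, Matrix.add_apply, hdiagΩ i, hi]
    have hRij : R i j = Ω i j := by
      simp [hR, Ddiag, Matrix.add_apply, hij']
    have hsub : (R i i)^2 + (R i j)^2 ≤ ∑ k, (R i k)^2 := by
      have : ∑ k ∈ ({i, j} : Finset (Fin l)), (R i k)^2 ≤ ∑ k, (R i k)^2 :=
        Finset.sum_le_sum_of_subset_of_nonneg (Finset.subset_univ _)
          (fun k _ _ => sq_nonneg _)
      rwa [Finset.sum_pair hij'] at this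
    have := hdiag i
    have hsq : (Ω i j)^2 ≤ 0 := by rw [hRii, hRij] at hsub; linarith
    exact pow_eq_zero_iff (by norm_num) |>.mp (le_antisymm hsq (sq_nonneg _))
  ext i j
  simp only [Matrix.zero_apply]
  rcases eq_or_ne ((i : ℕ)) (l - 1) with hi | hi
  · rcases eq_or_ne ((j : ℕ)) (l - 1) with hj | hj
    · have : i = j := Fin.ext (hi.trans hj.symm)
      subst this; exact hdiagΩ i
    · have := congrFun (congrFun hΩ j) i
      simp only [transpose_apply, Matrix.neg_apply] at this
      rw [this, hrow j i hj, neg_zero]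
  · exact hrow i j hi
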